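/- For every function f ∈ L¹(ℝ²), the set G_f = {s ∈ [0,π/2) : the set {x ∈ ℝ² : D̄_s f(x) = ∞} has positive Lebesgue measure} is a G_δσ set in [0,π/2), i.e. a countable union of sets each of which is G_δ in [0,π/2). -/

import Mathlib

open MeasureTheory Filter Set Real
open scoped ENNReal

noncomputable section

/-- Rotation of the plane about the origin by angle `s`. -/
def rot (s : ℝ) (p : ℝ × ℝ) : ℝ × ℝ :=
  (p.1 * Real.cos s - p.2 * Real.sin s, p.1 * Real.sin s + p.2 * Real.cos s)

/-- The open rectangle with slope `s`, corner `c` and side lengths `a`, `b`. -/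
def rect (s : ℝ) (c : ℝ × ℝ) (a b : ℝ) : Set (ℝ × ℝ) :=
  (fun p => c + rot s p) '' (Set.Ioo 0 a ×ˢ Set.Ioo 0 b)

/-- `R` is an open rectangle with slope `s` whose side lengths satisfy `P`. -/
def IsRectWith (s : ℝ) (P : ℝ → Prop) (R : Set (ℝ × ℝ)) : Prop :=
  ∃ c a b, 0 < a ∧ 0 < b ∧ P a ∧ P b ∧ R = rect s c a b

/-- `R` is an open rectangle with slope `s`. -/
def IsRect (s : ℝ) (R : Set (ℝ × ℝ)) : Prop :=
  IsRectWith s (fun _ => True) R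

/-- Average of `f` over the set `R`. -/
def avg (f : ℝ × ℝ → ℝ) (R : Set (ℝ × ℝ)) : ℝ :=
  (∫ p in R, f p) / (volume R).toReal

/-- The filter of slope-`s` rectangles containing `x` with diameters shrinking to `0`. -/
def rectFilter (s : ℝ) (x : ℝ × ℝ) : Filter (Set (ℝ × ℝ)) :=
  ⨅ d ∈ Set.Ioi (0 : ℝ), Filter.principal {R | IsRect s R ∧ x ∈ R ∧ Metric.diam R < d}

/-- The upper derivative `D̄_s f (x)`. -/
def upperDeriv (s : ℝ) (f : ℝ × ℝ → ℝ) (x : ℝ × ℝ) : EReal :=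
  Filter.limsup (fun R => (avg f R : EReal)) (rectFilter s x)

/-- The basis `R_s` differentiates the integral of `f`. -/
def Differentiates (s : ℝ) (f : ℝ × ℝ → ℝ) : Prop :=
  ∀ᵐ x : ℝ × ℝ, Filter.Tendsto (fun R => avg f R) (rectFilter s x) (nhds (f x))

/-- `S ⊆ [0, π/2)` is a `G_δ` set in `[0, π/2)`. -/
def IsGdeltaIn (S : Set ℝ) : Prop :=
  ∃ G : ℕ → Set ℝ, (∀ k, IsOpen (G k)) ∧ S = (⋂ k, G k) ∩ Set.Ico 0 (π / 2)

/-- `S` is a `G_δσ` set in `[0, π/2)`. -/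
def IsGdeltaSigmaIn (S : Set ℝ) : Prop :=
  ∃ F : ℕ → Set ℝ, (∀ n, IsGdeltaIn (F n)) ∧ S = ⋃ n, F n

/-- `S` is an `R`-set. -/
def IsRSet (S : Set ℝ) : Prop :=
  S ⊆ Set.Ico 0 (π / 2) ∧
    ∃ f : ℝ × ℝ → ℝ, Integrable f ∧
      (∀ s ∈ Set.Ico 0 (π / 2) \ S, Differentiates s f) ∧
      (∀ s ∈ S, ∀ᵐ x : ℝ × ℝ, upperDeriv s f x = ⊤)

/-- `S` is a `WR`-set. -/
def IsWRSet (S : Set ℝ) : Prop :=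
  S ⊆ Set.Ico 0 (π / 2) ∧
    ∃ f : ℝ × ℝ → ℝ, Integrable f ∧
      (∀ s ∈ Set.Ico 0 (π / 2) \ S, Differentiates s f) ∧
      (∀ s ∈ S, 0 < volume {x : ℝ × ℝ | upperDeriv s f x = ⊤})

/-- The grid square `Q_k^n` of side `1/n`. -/
def gridSq (n : ℕ) (k : ℤ × ℤ) : Set (ℝ × ℝ) :=
  (fun x : ℝ × ℝ => ((n : ℝ))⁻¹ • (((k.1 : ℝ), (k.2 : ℝ)) + x)) ''
    (Set.Ico (-(1 : ℝ)/2) (1/2) ×ˢ Set.Ico (-(1 : ℝ)/2) (1/2))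

/-- `mes_* A = inf_k |A ∩ Q_k|`. -/
def mesLow (A : Set (ℝ × ℝ)) : ℝ :=
  ⨅ k : ℤ × ℤ, (volume (A ∩ gridSq 1 k)).toReal

/-- `mes^* A = sup_k |A ∩ Q_k|`. -/
def mesUp (A : Set (ℝ × ℝ)) : ℝ :=
  ⨆ k : ℤ × ℤ, (volume (A ∩ gridSq 1 k)).toReal

/-- `dil_n A = {x : n x ∈ A}`. -/
def dil (n : ℕ) (A : Set (ℝ × ℝ)) : Set (ℝ × ℝ) :=
  {x : ℝ × ℝ | (n : ℝ) • x ∈ A}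

/-- `A` is a `δ`-set with respect to the slope `s`: a union of mutually disjoint
rectangles of slope `s` with both side lengths `≥ δ`. -/
def IsDeltaSet (s δ : ℝ) (A : Set (ℝ × ℝ)) : Prop :=
  ∃ (ι : Type) (R : ι → Set (ℝ × ℝ)),
    (∀ i, IsRectWith s (fun a => δ ≤ a) (R i)) ∧
      Pairwise (Function.onFun Disjoint R) ∧ A = ⋃ i, R i

/-- The maximal function over slope-`s` rectangles whose side lengths satisfy `P`. -/
def maxFn (s : ℝ) (P : ℝ → Prop) (f : ℝ × ℝ → ℝ) (x : ℝ × ℝ) : ℝ≥0∞ :=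
  ⨆ (R : Set (ℝ × ℝ)) (_ : IsRectWith s P R ∧ x ∈ R),
    ENNReal.ofReal (|∫ p in R, f p| / (volume R).toReal)

/-- The points `θ_k`, `k = ±1, ±2, …`. -/
def theta (ε γ : ℝ) (k : ℤ) : ℝ × ℝ :=
  (ε / 2 ^ k.natAbs, (k.sign : ℝ) * Real.tan γ * ε / 2 ^ k.natAbs)

/-- The strip `Γ_s(ε)`. -/
def strip (s ε : ℝ) : Set (ℝ × ℝ) :=
  rot s '' {x : ℝ × ℝ | |x.2| < ε}

/-- The Euclidean ball `B(ε)` in the plane. -/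
def euclBall (ε : ℝ) : Set (ℝ × ℝ) :=
  {x : ℝ × ℝ | Real.sqrt (x.1 ^ 2 + x.2 ^ 2) ≤ ε}


open scoped Topology

instance : MeasureTheory.Measure.IsAddHaarMeasure (volume : Measure (ℝ × ℝ)) :=
  MeasureTheory.Measure.prod.instIsAddHaarMeasure _ _

def rotL (s : ℝ) : (ℝ × ℝ) →ₗ[ℝ] (ℝ × ℝ) where
  toFun := rot s
  map_add' p q := by simp [rot]; constructor <;> ring
  map_smul' r p := by simp [rot]; constructor <;> ring

lemma rotL_det (s : ℝ) : LinearMap.det (rotL s) = 1 := by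
  rw [← LinearMap.det_toMatrix (Module.Basis.finTwoProd ℝ), Matrix.det_fin_two]
  simp [LinearMap.toMatrix_apply, rotL, rot, Module.Basis.finTwoProd]
  ring_nf
  exact Real.cos_sq_add_sin_sq s

lemma rot_continuous (s : ℝ) : Continuous (rot s) := by
  unfold rot; fun_prop

lemma rot_rot (s t : ℝ) (p : ℝ × ℝ) : rot s (rot t p) = rot (s + t) p := by
  simp [rot, Real.cos_add, Real.sin_add]; constructor <;> ring

lemma rot_zero (p : ℝ × ℝ) : rot 0 p = p := by simp [rot]

lemma rot_neg_rot (s : ℝ) (p : ℝ × ℝ) : rot (-s) (rot s p) = p := by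
  rw [rot_rot, neg_add_cancel, rot_zero]

lemma measurePreserving_rot (s : ℝ) : MeasurePreserving (rot s) volume volume := by
  have hdet : LinearMap.det (rotL s) ≠ 0 := by rw [rotL_det]; norm_num
  refine ⟨(rot_continuous s).measurable, ?_⟩
  refine Measure.ext fun A hA => ?_
  rw [Measure.map_apply (rot_continuous s).measurable hA]
  have : rot s ⁻¹' A = rotL s ⁻¹' A := rfl
  rw [this, Measure.addHaar_preimage_linearMap volume hdet, rotL_det]
  norm_num

lemma measurePreserving_unrect (s : ℝ) (c : ℝ × ℝ) :
    MeasurePreserving (fun x : ℝ × ℝ => rot (-s) (x - c)) volume volume :=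
  (measurePreserving_rot (-s)).comp (measurePreserving_sub_right volume c)

lemma mem_rect_iff {s : ℝ} {c : ℝ × ℝ} {a b : ℝ} {x : ℝ × ℝ} :
    x ∈ rect s c a b ↔ rot (-s) (x - c) ∈ Set.Ioo 0 a ×ˢ Set.Ioo 0 b := by
  constructor
  · rintro ⟨p, hp, rfl⟩
    simpa [add_sub_cancel_left, rot_neg_rot] using hp
  · intro h
    refine ⟨rot (-s) (x - c), h, ?_⟩
    show c + rot s (rot (-s) (x - c)) = x
    rw [rot_rot, add_neg_cancel, rot_zero, add_sub_cancel]

lemma rect_eq_preimage (s : ℝ) (c : ℝ × ℝ) (a b : ℝ) :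
    rect s c a b = (fun x : ℝ × ℝ => rot (-s) (x - c)) ⁻¹' (Set.Ioo 0 a ×ˢ Set.Ioo 0 b) := by
  ext x; exact mem_rect_iff

lemma rect_isOpen (s : ℝ) (c : ℝ × ℝ) (a b : ℝ) : IsOpen (rect s c a b) := by
  rw [rect_eq_preimage]
  exact (isOpen_Ioo.prod isOpen_Ioo).preimage ((rot_continuous (-s)).comp (continuous_id.sub continuous_const))

lemma volume_rect (s : ℝ) (c : ℝ × ℝ) (a b : ℝ) :
    volume (rect s c a b) = ENNReal.ofReal a * ENNReal.ofReal b := by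
  rw [rect_eq_preimage, (measurePreserving_unrect s c).measure_preimage
    ((isOpen_Ioo.prod isOpen_Ioo).measurableSet.nullMeasurableSet)]
  rw [show (volume : Measure (ℝ×ℝ)) = (volume : Measure ℝ).prod volume from rfl,
    Measure.prod_prod, Real.volume_Ioo, Real.volume_Ioo]
  simp



lemma abs_cos_sub_cos_le (x y : ℝ) : |Real.cos x - Real.cos y| ≤ |x - y| := by
  rw [Real.cos_sub_cos, abs_mul, abs_mul, abs_neg, abs_two]
  have h1 : |Real.sin ((x+y)/2)| ≤ 1 := Real.abs_sin_le_one _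
  have h2 : |Real.sin ((x-y)/2)| ≤ |(x-y)/2| := Real.abs_sin_le_abs
  calc 2 * |Real.sin ((x+y)/2)| * |Real.sin ((x-y)/2)|
      ≤ 2 * 1 * |(x-y)/2| :=
        mul_le_mul (mul_le_mul_of_nonneg_left h1 (by norm_num)) h2 (abs_nonneg _) (by norm_num)
    _ = |x - y| := by rw [abs_div, abs_two]; ring

lemma abs_sin_sub_sin_le (x y : ℝ) : |Real.sin x - Real.sin y| ≤ |x - y| := by
  rw [Real.sin_sub_sin, abs_mul, abs_mul, abs_two]
  have h1 : |Real.cos ((x+y)/2)| ≤ 1 := Real.abs_cos_le_one _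
  have h2 : |Real.sin ((x-y)/2)| ≤ |(x-y)/2| := Real.abs_sin_le_abs
  calc 2 * |Real.sin ((x-y)/2)| * |Real.cos ((x+y)/2)|
      ≤ 2 * |(x-y)/2| * 1 :=
        mul_le_mul (mul_le_mul_of_nonneg_left h2 (by norm_num)) h1 (abs_nonneg _) (by positivity)
    _ = |x - y| := by rw [abs_div, abs_two]; ring


lemma norm_rot_le (s : ℝ) (p : ℝ × ℝ) : ‖rot s p‖ ≤ |p.1| + |p.2| := by
  have h1 : |p.1 * Real.cos s - p.2 * Real.sin s| ≤ |p.1| + |p.2| := by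
    refine (abs_sub _ _).trans ?_
    rw [abs_mul, abs_mul]
    have := Real.abs_cos_le_one s
    have := Real.abs_sin_le_one s
    nlinarith [abs_nonneg p.1, abs_nonneg p.2]
  have h2 : |p.1 * Real.sin s + p.2 * Real.cos s| ≤ |p.1| + |p.2| := by
    refine (abs_add_le _ _).trans ?_
    rw [abs_mul, abs_mul]
    have := Real.abs_cos_le_one s
    have := Real.abs_sin_le_one s
    nlinarith [abs_nonneg p.1, abs_nonneg p.2]
  exact max_le h1 h2

lemma dist_rot_rot_le (s s' : ℝ) (p : ℝ × ℝ) :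
    dist (rot s' p) (rot s p) ≤ (|p.1| + |p.2|) * |s' - s| := by
  have hc := _root_.abs_cos_sub_cos_le s' s
  have hsn := _root_.abs_sin_sub_sin_le s' s
  have A : |p.1 * (Real.cos s' - Real.cos s)| ≤ |p.1| * |s' - s| := by
    rw [abs_mul]; exact mul_le_mul_of_nonneg_left hc (abs_nonneg _)
  have B : |p.2 * (Real.sin s' - Real.sin s)| ≤ |p.2| * |s' - s| := by
    rw [abs_mul]; exact mul_le_mul_of_nonneg_left hsn (abs_nonneg _)
  have C : |p.1 * (Real.sin s' - Real.sin s)| ≤ |p.1| * |s' - s| := by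
    rw [abs_mul]; exact mul_le_mul_of_nonneg_left hsn (abs_nonneg _)
  have D : |p.2 * (Real.cos s' - Real.cos s)| ≤ |p.2| * |s' - s| := by
    rw [abs_mul]; exact mul_le_mul_of_nonneg_left hc (abs_nonneg _)
  rw [Prod.dist_eq]
  refine max_le ?_ ?_
  · rw [Real.dist_eq]
    have e : (rot s' p).1 - (rot s p).1
        = p.1 * (Real.cos s' - Real.cos s) - p.2 * (Real.sin s' - Real.sin s) := by
      simp [rot]; ring
    rw [e]
    refine (abs_sub _ _).trans ?_
    nlinarith [A, B]
  · rw [Real.dist_eq]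
    have e : (rot s' p).2 - (rot s p).2
        = p.1 * (Real.sin s' - Real.sin s) + p.2 * (Real.cos s' - Real.cos s) := by
      simp [rot]; ring
    rw [e]
    refine (abs_add_le _ _).trans ?_
    nlinarith [C, D]

lemma isBounded_rect (s : ℝ) (c : ℝ × ℝ) (a b : ℝ) (ha : 0 < a) (hb : 0 < b) :
    Bornology.IsBounded (rect s c a b) := by
  rw [Metric.isBounded_iff]
  refine ⟨2 * (a + b), ?_⟩
  rintro x ⟨p, hp, rfl⟩ y ⟨q, hq, rfl⟩
  rw [dist_add_left]
  have hpb : |p.1| + |p.2| ≤ a + b := by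
    rcases hp with ⟨⟨h1, h2⟩, h3, h4⟩
    rw [abs_of_pos h1, abs_of_pos h3]
    exact add_le_add h2.le h4.le
  have hqb : |q.1| + |q.2| ≤ a + b := by
    rcases hq with ⟨⟨h1, h2⟩, h3, h4⟩
    rw [abs_of_pos h1, abs_of_pos h3]
    exact add_le_add h2.le h4.le
  calc dist (rot s p) (rot s q) ≤ ‖rot s p‖ + ‖rot s q‖ := dist_le_norm_add_norm _ _
    _ ≤ (|p.1| + |p.2|) + (|q.1| + |q.2|) := add_le_add (norm_rot_le s p) (norm_rot_le s q)
    _ ≤ 2 * (a + b) := by linarith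

lemma diam_rect_le (s s' : ℝ) (c : ℝ × ℝ) (a b : ℝ) (ha : 0 < a) (hb : 0 < b) :
    Metric.diam (rect s' c a b) ≤ Metric.diam (rect s c a b) + 2 * ((a + b) * |s' - s|) := by
  refine Metric.diam_le_of_forall_dist_le
    (add_nonneg Metric.diam_nonneg (by positivity)) ?_
  rintro x ⟨p, hp, rfl⟩ y ⟨q, hq, rfl⟩
  have hpb : |p.1| + |p.2| ≤ a + b := by
    rcases hp with ⟨⟨h1, h2⟩, h3, h4⟩
    rw [abs_of_pos h1, abs_of_pos h3]
    exact add_le_add h2.le h4.le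
  have hqb : |q.1| + |q.2| ≤ a + b := by
    rcases hq with ⟨⟨h1, h2⟩, h3, h4⟩
    rw [abs_of_pos h1, abs_of_pos h3]
    exact add_le_add h2.le h4.le
  rw [dist_add_left]
  have hmid : dist (rot s p) (rot s q) ≤ Metric.diam (rect s c a b) :=
    Metric.dist_le_diam_of_mem (isBounded_rect s c a b ha hb)
      ⟨p, hp, rfl⟩ ⟨q, hq, rfl⟩ |>.trans_eq' (by rw [dist_add_left])
  have h1 : dist (rot s' p) (rot s p) ≤ (a + b) * |s' - s| :=
    (dist_rot_rot_le s s' p).trans (mul_le_mul_of_nonneg_right hpb (abs_nonneg _))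
  have h2 : dist (rot s q) (rot s' q) ≤ (a + b) * |s' - s| := by
    rw [dist_comm]
    exact (dist_rot_rot_le s s' q).trans (mul_le_mul_of_nonneg_right hqb (abs_nonneg _))
  calc dist (rot s' p) (rot s' q)
      ≤ dist (rot s' p) (rot s p) + dist (rot s p) (rot s q) + dist (rot s q) (rot s' q) :=
        dist_triangle4 _ _ _ _
    _ ≤ (a + b) * |s' - s| + Metric.diam (rect s c a b) + (a + b) * |s' - s| := by
        exact add_le_add (add_le_add h1 hmid) h2
    _ = Metric.diam (rect s c a b) + 2 * ((a + b) * |s' - s|) := by ring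

lemma rect_eq_add (s : ℝ) (c : ℝ × ℝ) (a b : ℝ) :
    rect s c a b = (fun x => c + x) '' rect s 0 a b := by
  unfold rect
  rw [← Set.image_comp]
  simp [Function.comp_def]

lemma diam_rect_const (s : ℝ) (c c' : ℝ × ℝ) (a b : ℝ) :
    Metric.diam (rect s c' a b) = Metric.diam (rect s c a b) := by
  rw [rect_eq_add s c, rect_eq_add s c',
    (isometry_add_left c).diam_image, (isometry_add_left c').diam_image]

lemma eventually_diam_lt {s : ℝ} {c : ℝ × ℝ} {a b d : ℝ} (ha : 0 < a) (hb : 0 < b)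
    (h : Metric.diam (rect s c a b) < d) :
    ∀ᶠ s' in 𝓝 s, ∀ c' : ℝ × ℝ, Metric.diam (rect s' c' a b) < d := by
  have h0 : Tendsto (fun s' : ℝ => Metric.diam (rect s c a b) + 2 * ((a + b) * |s' - s|))
      (𝓝 s) (𝓝 (Metric.diam (rect s c a b) + 2 * ((a + b) * |s - s|))) := by
    refine tendsto_const_nhds.add (Filter.Tendsto.const_mul _ (Filter.Tendsto.const_mul _ ?_))
    exact ((continuous_id.sub continuous_const).abs.tendsto s)
  have h1 : ∀ᶠ s' in 𝓝 s,
      Metric.diam (rect s c a b) + 2 * ((a + b) * |s' - s|) < d := by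
    refine h0.eventually_lt_const ?_
    simpa using h
  filter_upwards [h1] with s' hs' c'
  calc Metric.diam (rect s' c' a b) = Metric.diam (rect s' c a b) := diam_rect_const s' c c' a b
    _ ≤ Metric.diam (rect s c a b) + 2 * ((a + b) * |s' - s|) := diam_rect_le s s' c a b ha hb
    _ < d := hs'


lemma continuous_unrect (x c : ℝ × ℝ) : Continuous (fun s' : ℝ => rot (-s') (x - c)) := by
  unfold rot
  fun_prop

lemma eventually_mem_rect {s : ℝ} {c : ℝ × ℝ} {a b : ℝ} {x : ℝ × ℝ}
    (hx : x ∈ rect s c a b) : ∀ᶠ s' in 𝓝 s, x ∈ rect s' c a b := by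
  rw [mem_rect_iff] at hx
  have hcont := (continuous_unrect x c).tendsto s
  have := hcont.eventually (IsOpen.eventually_mem (isOpen_Ioo.prod isOpen_Ioo) hx)
  filter_upwards [this] with s' hs'
  exact mem_rect_iff.mpr hs'

lemma volume_openBox (a b : ℝ) :
    volume (Set.Ioo (0:ℝ) a ×ˢ Set.Ioo (0:ℝ) b) = ENNReal.ofReal a * ENNReal.ofReal b := by
  rw [show (volume : Measure (ℝ×ℝ)) = (volume : Measure ℝ).prod volume from rfl,
    Measure.prod_prod, Real.volume_Ioo]
  simp

lemma volume_closedBox (a b : ℝ) :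
    volume (Set.Icc (0:ℝ) a ×ˢ Set.Icc (0:ℝ) b) = ENNReal.ofReal a * ENNReal.ofReal b := by
  rw [show (volume : Measure (ℝ×ℝ)) = (volume : Measure ℝ).prod volume from rfl,
    Measure.prod_prod, Real.volume_Icc, Real.volume_Icc]
  simp

/-- a.e. convergence of indicators of rotating rectangles -/
lemma ae_tendsto_indicator (s : ℝ) (c : ℝ × ℝ) (a b : ℝ) (f : ℝ × ℝ → ℝ) :
    ∀ᵐ x : ℝ × ℝ, Tendsto (fun s' => (rect s' c a b).indicator f x) (𝓝 s)
      (𝓝 ((rect s c a b).indicator f x)) := by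
  have hnull : volume ((fun x : ℝ × ℝ => rot (-s) (x - c)) ⁻¹'
      ((Set.Icc 0 a ×ˢ Set.Icc 0 b) \ (Set.Ioo 0 a ×ˢ Set.Ioo 0 b))) = 0 := by
    rw [(measurePreserving_unrect s c).measure_preimage
      (((measurableSet_Icc.prod measurableSet_Icc).diff
        (measurableSet_Ioo.prod measurableSet_Ioo)).nullMeasurableSet)]
    rw [measure_diff (Set.prod_mono Set.Ioo_subset_Icc_self Set.Ioo_subset_Icc_self)
      ((measurableSet_Ioo.prod measurableSet_Ioo).nullMeasurableSet)
      (by rw [volume_openBox]; exact ENNReal.mul_ne_top ENNReal.ofReal_ne_top ENNReal.ofReal_ne_top)]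
    rw [volume_openBox, volume_closedBox, tsub_self]
  have hae := MeasureTheory.measure_eq_zero_iff_ae_notMem.mp hnull
  filter_upwards [hae] with x hx
  by_cases hmem : rot (-s) (x - c) ∈ Set.Ioo (0:ℝ) a ×ˢ Set.Ioo (0:ℝ) b
  · have hxr : x ∈ rect s c a b := mem_rect_iff.mpr hmem
    rw [Set.indicator_of_mem hxr]
    refine Tendsto.congr' ?_ tendsto_const_nhds
    filter_upwards [eventually_mem_rect hxr] with s' hs'
    exact (Set.indicator_of_mem hs' f).symm
  · have hnotIcc : rot (-s) (x - c) ∉ Set.Icc (0:ℝ) a ×ˢ Set.Icc (0:ℝ) b := by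
      intro hIcc
      exact hx ⟨hIcc, hmem⟩
    have hxr : x ∉ rect s c a b := fun h => hmem (mem_rect_iff.mp h)
    rw [Set.indicator_of_notMem hxr]
    have hcont := (continuous_unrect x c).tendsto s
    have hev := hcont.eventually (IsOpen.eventually_mem
      ((isClosed_Icc.prod isClosed_Icc).isOpen_compl) hnotIcc)
    refine Tendsto.congr' ?_ tendsto_const_nhds
    filter_upwards [hev] with s' hs'
    have : x ∉ rect s' c a b := by
      intro h
      exact hs' (Set.prod_mono Set.Ioo_subset_Icc_self Set.Ioo_subset_Icc_self (mem_rect_iff.mp h))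
    exact (Set.indicator_of_notMem this f).symm

lemma tendsto_setIntegral_rect {f : ℝ × ℝ → ℝ} (hf : Integrable f) (s : ℝ) (c : ℝ × ℝ)
    (a b : ℝ) :
    Tendsto (fun s' => ∫ p in rect s' c a b, f p) (𝓝 s) (𝓝 (∫ p in rect s c a b, f p)) := by
  have hmeas : ∀ s' : ℝ, MeasurableSet (rect s' c a b) := fun s' =>
    (rect_isOpen s' c a b).measurableSet
  simp only [← MeasureTheory.integral_indicator (hmeas _)]
  refine MeasureTheory.tendsto_integral_filter_of_dominated_convergence (fun x => |f x|)
    ?_ ?_ hf.abs (ae_tendsto_indicator s c a b f)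
  · exact Filter.Eventually.of_forall fun s' => hf.aestronglyMeasurable.indicator (hmeas s')
  · refine Filter.Eventually.of_forall fun s' => Filter.Eventually.of_forall fun x => ?_
    simpa [Real.norm_eq_abs] using norm_indicator_le_norm_self (s := rect s' c a b) (f := f) (a := x)

lemma tendsto_vol_diff_rect (s : ℝ) (c : ℝ × ℝ) {a b : ℝ} (ha : 0 < a) (hb : 0 < b) :
    Tendsto (fun s' => volume (rect s c a b \ rect s' c a b)) (𝓝 s) (𝓝 0) := by
  have hmeas : ∀ s' : ℝ, MeasurableSet (rect s' c a b) := fun s' =>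
    (rect_isOpen s' c a b).measurableSet
  have hrectfin : volume (rect s c a b) ≠ ⊤ := by
    rw [volume_rect]
    exact ENNReal.mul_ne_top ENNReal.ofReal_ne_top ENNReal.ofReal_ne_top
  have hfin : ∀ s' : ℝ, volume (rect s c a b \ rect s' c a b) ≠ ⊤ := fun s' =>
    ne_top_of_le_ne_top hrectfin (measure_mono Set.diff_subset)
  have key : Tendsto (fun s' => (volume (rect s c a b \ rect s' c a b)).toReal) (𝓝 s) (𝓝 0) := by
    have hrw : ∀ s' : ℝ, (volume (rect s c a b \ rect s' c a b)).toReal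
        = ∫ x, (rect s c a b \ rect s' c a b).indicator (fun _ => (1:ℝ)) x := by
      intro s'
      rw [MeasureTheory.integral_indicator ((hmeas s).diff (hmeas s'))]
      simp [MeasureTheory.setIntegral_const, Measure.real]
    simp only [hrw]
    have h0 : (0:ℝ) = ∫ x : ℝ × ℝ, (0:ℝ) := by simp
    rw [h0]
    refine MeasureTheory.tendsto_integral_filter_of_dominated_convergence
      ((rect s c a b).indicator (fun _ => (1:ℝ))) ?_ ?_ ?_ ?_
    · exact Filter.Eventually.of_forall fun s' =>
        (aestronglyMeasurable_const).indicator ((hmeas s).diff (hmeas s'))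
    · refine Filter.Eventually.of_forall fun s' => Filter.Eventually.of_forall fun x => ?_
      by_cases hx : x ∈ rect s c a b \ rect s' c a b
      · rw [Set.indicator_of_mem hx, Set.indicator_of_mem hx.1]
        simp
      · rw [Set.indicator_of_notMem hx]
        simp only [norm_zero]
        by_cases hx2 : x ∈ rect s c a b
        · rw [Set.indicator_of_mem hx2]; norm_num
        · rw [Set.indicator_of_notMem hx2]
    · refine ((MeasureTheory.integrableOn_const_iff (C := (1:ℝ))).mpr ?_).integrable_indicator (hmeas s)
      right
      rw [volume_rect]
      exact ENNReal.mul_lt_top ENNReal.ofReal_lt_top ENNReal.ofReal_lt_top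
    · refine Filter.Eventually.of_forall fun x => ?_
      by_cases hx : x ∈ rect s c a b
      · refine Tendsto.congr' ?_ tendsto_const_nhds
        filter_upwards [eventually_mem_rect hx] with s' hs'
        exact (Set.indicator_of_notMem (fun h => h.2 hs') _).symm
      · refine Tendsto.congr' ?_ tendsto_const_nhds
        refine Filter.Eventually.of_forall fun s' => ?_
        exact (Set.indicator_of_notMem (fun h => hx h.1) _).symm
  have h2 : Tendsto (fun s' => ENNReal.ofReal ((volume (rect s c a b \ rect s' c a b)).toReal))
      (𝓝 s) (𝓝 0) := by
    simpa using (ENNReal.tendsto_ofReal key)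
  refine h2.congr fun s' => ?_
  rw [ENNReal.ofReal_toReal (hfin s')]


/-- The open set `U_n(s)` of points lying in an admissible rectangle with large average. -/
def Uset (f : ℝ × ℝ → ℝ) (s : ℝ) (n : ℕ) : Set (ℝ × ℝ) :=
  {x | ∃ R, IsRect s R ∧ x ∈ R ∧ Metric.diam R < 1/(n+1) ∧ (n:ℝ) < avg f R}

lemma isOpen_Uset (f : ℝ × ℝ → ℝ) (s : ℝ) (n : ℕ) : IsOpen (Uset f s n) := by
  rw [isOpen_iff_mem_nhds]
  rintro x ⟨R, hR, hxR, hd, havg⟩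
  have hRopen : IsOpen R := by
    obtain ⟨c, a, b, ha, hb, -, -, rfl⟩ := hR
    exact rect_isOpen _ _ _ _
  exact Filter.mem_of_superset (hRopen.mem_nhds hxR) fun y hy => ⟨R, hR, hy, hd, havg⟩

lemma antitone_Uset (f : ℝ × ℝ → ℝ) (s : ℝ) : Antitone (Uset f s) := by
  intro m n hmn x
  rintro ⟨R, hR, hxR, hd, havg⟩
  refine ⟨R, hR, hxR, hd.trans_le ?_, lt_of_le_of_lt ?_ havg⟩
  · apply one_div_le_one_div_of_le
    · positivity
    · exact_mod_cast add_le_add_left (Nat.cast_le.mpr hmn) 1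
  · exact_mod_cast Nat.cast_le.mpr hmn

lemma eventually_rectFilter {s : ℝ} {x : ℝ × ℝ} {p : Set (ℝ × ℝ) → Prop} :
    (∀ᶠ R in rectFilter s x, p R) ↔
    ∃ d > 0, ∀ R, IsRect s R → x ∈ R → Metric.diam R < d → p R := by
  have hdir : DirectedOn
      ((fun d : ℝ => 𝓟 {R | IsRect s R ∧ x ∈ R ∧ Metric.diam R < d}) ⁻¹'o (· ≥ ·))
      (Set.Ioi 0) := by
    intro d₁ h₁ d₂ h₂
    refine ⟨min d₁ d₂, Set.mem_Ioi.mpr (lt_min h₁ h₂), ?_, ?_⟩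
    · exact principal_mono.mpr fun R hR => ⟨hR.1, hR.2.1, hR.2.2.trans_le (min_le_left _ _)⟩
    · exact principal_mono.mpr fun R hR => ⟨hR.1, hR.2.1, hR.2.2.trans_le (min_le_right _ _)⟩
  rw [show rectFilter s x
      = ⨅ d ∈ Set.Ioi (0:ℝ), 𝓟 {R | IsRect s R ∧ x ∈ R ∧ Metric.diam R < d} from rfl]
  rw [Filter.eventually_iff, Filter.mem_biInf_of_directed hdir ⟨1, Set.mem_Ioi.mpr zero_lt_one⟩]
  constructor
  · rintro ⟨d, hd, hsub⟩
    rw [Filter.mem_principal] at hsub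
    exact ⟨d, hd, fun R h1 h2 h3 => hsub ⟨h1, h2, h3⟩⟩
  · rintro ⟨d, hd, h⟩
    refine ⟨d, hd, ?_⟩
    rw [Filter.mem_principal]
    rintro R ⟨h1, h2, h3⟩
    exact h R h1 h2 h3

lemma upperDeriv_eq_top_iff {f : ℝ × ℝ → ℝ} {s : ℝ} {x : ℝ × ℝ} :
    upperDeriv s f x = ⊤ ↔ ∀ n : ℕ, x ∈ Uset f s n := by
  rw [upperDeriv, Filter.limsup_eq, sInf_eq_top]
  constructor
  · intro h n
    have hne : ((n : ℝ) : EReal) ≠ ⊤ := EReal.coe_ne_top _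
    have hnev : ¬ ∀ᶠ R in rectFilter s x, ((avg f R : ℝ) : EReal) ≤ ((n:ℝ) : EReal) := by
      intro hev
      exact hne (h _ hev)
    rw [eventually_rectFilter] at hnev
    push_neg at hnev
    obtain ⟨R, hR, hxR, hdiam, hgt⟩ := hnev (1/(n+1)) (by positivity)
    refine ⟨R, hR, hxR, hdiam, ?_⟩
    exact EReal.coe_lt_coe_iff.mp hgt
  · intro h a ha
    by_contra hne
    simp only [Set.mem_setOf_eq] at ha
    rw [eventually_rectFilter] at ha
    obtain ⟨d, hd, hall⟩ := ha
    have hlt : a < ⊤ := lt_of_le_of_ne le_top hne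
    obtain ⟨n₀, hn₀⟩ : ∃ n₀ : ℕ, a ≤ ((n₀ : ℝ) : EReal) := by
      induction a using EReal.rec with
      | bot => exact ⟨0, bot_le⟩
      | coe r => exact ⟨⌈r⌉₊, by exact_mod_cast EReal.coe_le_coe_iff.mpr (Nat.le_ceil r)⟩
      | top => exact absurd rfl hne
    obtain ⟨n₁, hn₁⟩ := exists_nat_one_div_lt hd
    set n := max n₀ n₁ with hn
    obtain ⟨R, hR, hxR, hdiam, havg⟩ := h n
    have hdiam' : Metric.diam R < d := by
      have h11 : (1:ℝ)/(n+1) ≤ 1/(n₁+1) := by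
        apply one_div_le_one_div_of_le
        · positivity
        · have : (n₁:ℝ) ≤ n := by exact_mod_cast Nat.le_max_right n₀ n₁
          linarith
      exact (hdiam.trans_le h11).trans hn₁
    have hua : ((avg f R : ℝ) : EReal) ≤ a := hall R hR hxR hdiam'
    have hna : ((n:ℝ) : EReal) < a :=
      lt_of_lt_of_le (EReal.coe_lt_coe_iff.mpr havg) hua
    have han : a ≤ ((n:ℝ) : EReal) := by
      refine hn₀.trans ?_
      apply EReal.coe_le_coe_iff.mpr
      exact_mod_cast Nat.le_max_left n₀ n₁
    exact absurd hna (not_lt.mpr han)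


lemma tendsto_avg_rect {f : ℝ × ℝ → ℝ} (hf : Integrable f) (s : ℝ) (c : ℝ × ℝ)
    {a b : ℝ} (ha : 0 < a) (hb : 0 < b) :
    Tendsto (fun s' => avg f (rect s' c a b)) (𝓝 s) (𝓝 (avg f (rect s c a b))) := by
  have hrw : ∀ s' : ℝ, avg f (rect s' c a b) = (∫ p in rect s' c a b, f p) / (a * b) := by
    intro s'
    rw [avg, volume_rect, ENNReal.toReal_mul, ENNReal.toReal_ofReal ha.le,
      ENNReal.toReal_ofReal hb.le]
  simp only [hrw]
  exact (tendsto_setIntegral_rect hf s c a b).div_const _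

lemma rect_subset_Uset {f : ℝ × ℝ → ℝ} {s' : ℝ} {n : ℕ} {c : ℝ × ℝ} {a b : ℝ}
    (ha : 0 < a) (hb : 0 < b) (hd : Metric.diam (rect s' c a b) < 1/(n+1))
    (hav : (n:ℝ) < avg f (rect s' c a b)) : rect s' c a b ⊆ Uset f s' n :=
  fun y hy => ⟨rect s' c a b, ⟨c, a, b, ha, hb, trivial, trivial, rfl⟩, hy, hd, hav⟩

/-- Lower semicontinuity: the superlevel sets of `s ↦ volume (Uset f s n ∩ B)` are open. -/
lemma isOpen_superlevel {f : ℝ × ℝ → ℝ} (hf : Integrable f) (n : ℕ) (B : Set (ℝ × ℝ))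
    (hB : IsOpen B) (t : ℝ≥0∞) :
    IsOpen {s : ℝ | t < volume (Uset f s n ∩ B)} := by
  rw [isOpen_iff_mem_nhds]
  intro s hs
  rw [Set.mem_setOf_eq] at hs
  rw [← Filter.eventually_iff]
  -- compact inner approximation
  obtain ⟨K, hKU, hKcomp, hKt⟩ :=
    ((isOpen_Uset f s n).inter hB).exists_lt_isCompact hs
  -- cover by admissible rectangles
  have hcv : ∀ x : K, ∃ (c : ℝ × ℝ) (a : ℝ) (b : ℝ), 0 < a ∧ 0 < b ∧
      (x : ℝ × ℝ) ∈ rect s c a b ∧ Metric.diam (rect s c a b) < 1/(n+1) ∧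
      (n:ℝ) < avg f (rect s c a b) := by
    rintro ⟨x, hx⟩
    obtain ⟨R, ⟨c, a, b, ha, hb, -, -, rfl⟩, hxR, hdR, havR⟩ := (hKU hx).1
    exact ⟨c, a, b, ha, hb, hxR, hdR, havR⟩
  choose cc aa bb hpa hpb hmem hdiam havg using hcv
  have hcover : K ⊆ ⋃ i : K, rect s (cc i) (aa i) (bb i) := fun y hy =>
    Set.mem_iUnion.mpr ⟨⟨y, hy⟩, hmem ⟨y, hy⟩⟩
  obtain ⟨I, hI⟩ := hKcomp.elim_finite_subcover (fun i : K => rect s (cc i) (aa i) (bb i))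
    (fun i => rect_isOpen _ _ _ _) hcover
  -- the three eventual conditions
  have ev1 : ∀ᶠ s' in 𝓝 s, ∀ i ∈ I, Metric.diam (rect s' (cc i) (aa i) (bb i)) < 1/(n+1) := by
    rw [Filter.eventually_all_finset]
    intro i _
    filter_upwards [eventually_diam_lt (hpa i) (hpb i) (hdiam i)] with s' h using h (cc i)
  have ev2 : ∀ᶠ s' in 𝓝 s, ∀ i ∈ I, (n:ℝ) < avg f (rect s' (cc i) (aa i) (bb i)) := by
    rw [Filter.eventually_all_finset]
    intro i _
    exact (tendsto_avg_rect hf s (cc i) (hpa i) (hpb i)).eventually_const_lt (havg i)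
  have hKfin : volume K ≠ ⊤ := hKcomp.measure_lt_top.ne
  have hεpos : 0 < volume K - t := tsub_pos_of_lt hKt
  have ev3 : ∀ᶠ s' in 𝓝 s,
      (∑ i ∈ I, volume (rect s (cc i) (aa i) (bb i) \ rect s' (cc i) (aa i) (bb i)))
        < volume K - t := by
    have hsum : Tendsto (fun s' => ∑ i ∈ I,
        volume (rect s (cc i) (aa i) (bb i) \ rect s' (cc i) (aa i) (bb i))) (𝓝 s) (𝓝 0) := by
      have := tendsto_finset_sum I
        (fun i (_ : i ∈ I) => tendsto_vol_diff_rect s (cc i) (hpa i) (hpb i))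
      simpa using this
    exact hsum.eventually_lt_const hεpos
  filter_upwards [ev1, ev2, ev3] with s' h1 h2 h3
  -- the union of moved rectangles
  set W' : Set (ℝ × ℝ) := ⋃ i ∈ I, rect s' (cc i) (aa i) (bb i) with hW'
  have hsub : W' ∩ B ⊆ Uset f s' n ∩ B := by
    rintro y ⟨hyW, hyB⟩
    obtain ⟨i, hiI, hyi⟩ := Set.mem_iUnion₂.mp hyW
    exact ⟨rect_subset_Uset (hpa i) (hpb i) (h1 i hiI) (h2 i hiI) hyi, hyB⟩
  refine lt_of_lt_of_le ?_ (measure_mono hsub)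
  -- K ∩ B covered by W' ∩ B and the diffs
  by_contra hcon
  push_neg at hcon
  have hKsub : K ⊆ (W' ∩ B) ∪ ⋃ i ∈ I, (rect s (cc i) (aa i) (bb i) \ rect s' (cc i) (aa i) (bb i)) := by
    intro y hy
    obtain ⟨i, hiI, hyi⟩ := Set.mem_iUnion₂.mp (hI hy)
    by_cases hy' : y ∈ rect s' (cc i) (aa i) (bb i)
    · exact Or.inl ⟨Set.mem_biUnion hiI hy', (hKU hy).2⟩
    · exact Or.inr (Set.mem_biUnion hiI ⟨hyi, hy'⟩)
  have : volume K ≤ volume (W' ∩ B) +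
      ∑ i ∈ I, volume (rect s (cc i) (aa i) (bb i) \ rect s' (cc i) (aa i) (bb i)) :=
    (measure_mono hKsub).trans ((measure_union_le _ _).trans
      (add_le_add_right (measure_biUnion_finset_le _ _) _))
  have htne : t ≠ ⊤ := (hKt.trans hKcomp.measure_lt_top).ne
  have h4 : volume K ≤ t + ∑ i ∈ I,
      volume (rect s (cc i) (aa i) (bb i) \ rect s' (cc i) (aa i) (bb i)) :=
    this.trans (add_le_add_left hcon _)
  have h5 : t + (∑ i ∈ I,
      volume (rect s (cc i) (aa i) (bb i) \ rect s' (cc i) (aa i) (bb i)))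
      < t + (volume K - t) := ENNReal.add_lt_add_left htne h3
  have h6 : t + (volume K - t) = volume K := add_tsub_cancel_of_le hKt.le
  exact absurd (h4.trans_lt (h5.trans_eq h6)) (lt_irrefl _)


lemma ofReal_le_iff_forall {r : ℝ} (hr : 0 < r) (v : ℝ≥0∞) :
    ENNReal.ofReal r ≤ v ↔ ∀ i : ℕ, ENNReal.ofReal (r - r/(i+2)) < v := by
  constructor
  · intro h i
    refine lt_of_lt_of_le ?_ h
    rw [ENNReal.ofReal_lt_ofReal_iff hr]
    have : 0 < r / (i+2) := by positivity
    linarith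
  · intro h
    by_contra hcon
    rw [not_le] at hcon
    have hvne : v ≠ ⊤ := (hcon.trans_le le_top).ne
    have hvr : v.toReal < r := ENNReal.toReal_lt_of_lt_ofReal hcon
    set δ := r - v.toReal with hδ
    have hδpos : 0 < δ := by simp [hδ]; linarith
    obtain ⟨i, hi⟩ := exists_nat_gt (r / δ)
    have hsmall : r / (i+2) < δ := by
      rw [div_lt_iff₀ (by positivity)]
      have h2 : r / δ < i + 2 := by
        refine hi.trans ?_
        linarith
      calc r = (r / δ) * δ := by field_simp
        _ < (i+2) * δ := by
            exact mul_lt_mul_of_pos_right h2 hδpos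
        _ = δ * (i+2) := by ring
    have hgt : v.toReal < r - r/(i+2) := by
      simp only [hδ] at hsmall
      linarith
    have hA : (0:ℝ) ≤ r - r/(i+2) := le_of_lt (lt_of_le_of_lt ENNReal.toReal_nonneg hgt)
    have hlt : ENNReal.ofReal (r - r/(i+2)) < v := h i
    rw [← ENNReal.ofReal_toReal hvne,
      ENNReal.ofReal_lt_ofReal_iff_of_nonneg hA] at hlt
    linarith

lemma Eset_eq (f : ℝ × ℝ → ℝ) (s : ℝ) :
    {x : ℝ × ℝ | upperDeriv s f x = ⊤} = ⋂ n, Uset f s n := by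
  ext x
  simp only [Set.mem_setOf_eq, Set.mem_iInter]
  exact upperDeriv_eq_top_iff

lemma pos_iff_exists (f : ℝ × ℝ → ℝ) (s : ℝ) :
    0 < volume {x : ℝ × ℝ | upperDeriv s f x = ⊤} ↔
    ∃ m j : ℕ, ∀ n : ℕ, ENNReal.ofReal (1/((j:ℝ)+1))
      ≤ volume (Uset f s n ∩ Metric.ball 0 ((m:ℝ)+1)) := by
  rw [Eset_eq]
  set E := ⋂ n, Uset f s n with hE
  constructor
  · intro h
    have hcover : E ⊆ ⋃ m : ℕ, (E ∩ Metric.ball 0 ((m:ℝ)+1)) := by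
      intro x hx
      obtain ⟨m, hm⟩ := exists_nat_gt ‖x‖
      refine Set.mem_iUnion.mpr ⟨m, hx, ?_⟩
      rw [Metric.mem_ball, dist_zero_right]
      linarith
    have hex : ∃ m : ℕ, 0 < volume (E ∩ Metric.ball 0 ((m:ℝ)+1)) := by
      by_contra h0
      push_neg at h0
      simp only [le_zero_iff] at h0
      have hle : volume E ≤ ∑' m : ℕ, volume (E ∩ Metric.ball 0 ((m:ℝ)+1)) :=
        (measure_mono hcover).trans (measure_iUnion_le _)
      simp only [h0, tsum_zero] at hle
      exact absurd (le_antisymm hle (by positivity)) h.ne'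
    obtain ⟨m, hm⟩ := hex
    have hfin : volume (E ∩ Metric.ball 0 ((m:ℝ)+1)) ≠ ⊤ :=
      ne_top_of_le_ne_top (measure_ball_lt_top :
        volume (Metric.ball (0:ℝ×ℝ) ((m:ℝ)+1)) < ⊤).ne (measure_mono Set.inter_subset_right)
    obtain ⟨k, hk⟩ := ENNReal.exists_inv_nat_lt hm.ne'
    refine ⟨m, k, fun n => ?_⟩
    have h1 : ENNReal.ofReal (1/((k:ℝ)+1)) ≤ ((k:ℝ≥0∞))⁻¹ := by
      rw [one_div, ENNReal.ofReal_inv_of_pos (by positivity)]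
      rw [show ((k:ℝ)+1) = ((k+1 : ℕ):ℝ) by push_cast; ring, ENNReal.ofReal_natCast]
      exact ENNReal.inv_le_inv.mpr (by exact_mod_cast Nat.le_succ k)
    refine (h1.trans hk.le).trans (measure_mono ?_)
    exact Set.inter_subset_inter_left _ (Set.iInter_subset _ n)
  · rintro ⟨m, j, h⟩
    have hmeas : ∀ n : ℕ, NullMeasurableSet (Uset f s n ∩ Metric.ball 0 ((m:ℝ)+1)) volume :=
      fun n => ((isOpen_Uset f s n).inter Metric.isOpen_ball).measurableSet.nullMeasurableSet
    have hanti : Antitone (fun n => Uset f s n ∩ Metric.ball 0 ((m:ℝ)+1)) :=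
      fun i k hik => Set.inter_subset_inter_left _ (antitone_Uset f s hik)
    have hfin : ∃ n : ℕ, volume (Uset f s n ∩ Metric.ball 0 ((m:ℝ)+1)) ≠ ⊤ :=
      ⟨0, ne_top_of_le_ne_top (measure_ball_lt_top :
        volume (Metric.ball (0:ℝ×ℝ) ((m:ℝ)+1)) < ⊤).ne (measure_mono Set.inter_subset_right)⟩
    have hiI := hanti.measure_iInter hmeas hfin
    have hEinter : (⋂ n, (Uset f s n ∩ Metric.ball 0 ((m:ℝ)+1))) = E ∩ Metric.ball 0 ((m:ℝ)+1) := by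
      rw [hE, Set.iInter_inter]
    calc (0:ℝ≥0∞) < ENNReal.ofReal (1/((j:ℝ)+1)) := ENNReal.ofReal_pos.mpr (by positivity)
      _ ≤ ⨅ n, volume (Uset f s n ∩ Metric.ball 0 ((m:ℝ)+1)) := le_iInf h
      _ = volume (E ∩ Metric.ball 0 ((m:ℝ)+1)) := by rw [← hiI, hEinter]
      _ ≤ volume E := measure_mono Set.inter_subset_left


/-- for every `f ∈ L¹(ℝ²)`, the set `G_f` of slopes `s ∈ [0, π/2)` for which
`{x : D̄_s f (x) = ∞}` has positive Lebesgue measure is a `G_δσ` set in `[0, π/2)`. -/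
theorem gdeltasigma_of_pos_measure_infinite_upperDeriv (f : ℝ × ℝ → ℝ) (hf : Integrable f) :
    IsGdeltaSigmaIn
      {s : ℝ | s ∈ Set.Ico 0 (π / 2) ∧ 0 < volume {x : ℝ × ℝ | upperDeriv s f x = ⊤}} := by
  classical
  refine ⟨fun k =>
    {s : ℝ | ∀ n : ℕ, ENNReal.ofReal (1/(((Denumerable.ofNat (ℕ × ℕ) k).2 : ℝ)+1))
      ≤ volume (Uset f s n ∩ Metric.ball 0 (((Denumerable.ofNat (ℕ × ℕ) k).1 : ℝ)+1))}
      ∩ Set.Ico 0 (π/2), ?_, ?_⟩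
  · intro k
    set m := (Denumerable.ofNat (ℕ × ℕ) k).1 with hm
    set j := (Denumerable.ofNat (ℕ × ℕ) k).2 with hj
    refine ⟨fun l => {s : ℝ |
      ENNReal.ofReal (1/((j:ℝ)+1) - (1/((j:ℝ)+1))/(((Denumerable.ofNat (ℕ × ℕ) l).2 : ℝ)+2))
        < volume (Uset f s (Denumerable.ofNat (ℕ × ℕ) l).1 ∩ Metric.ball 0 ((m:ℝ)+1))}, ?_, ?_⟩
    · intro l
      exact isOpen_superlevel hf _ _ Metric.isOpen_ball _
    · ext s
      simp only [Set.mem_inter_iff, Set.mem_iInter, Set.mem_setOf_eq]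
      refine and_congr_left' ?_
      constructor
      · intro hA l
        exact (ofReal_le_iff_forall (by positivity) _).mp
          (hA (Denumerable.ofNat (ℕ × ℕ) l).1) (Denumerable.ofNat (ℕ × ℕ) l).2
      · intro hB n
        rw [ofReal_le_iff_forall (by positivity)]
        intro i
        have := hB (Encodable.encode ((n, i) : ℕ × ℕ))
        rwa [Denumerable.ofNat_encode] at this
  · ext s
    simp only [Set.mem_setOf_eq, Set.mem_iUnion, Set.mem_inter_iff]
    rw [pos_iff_exists f s]
    constructor
    · rintro ⟨hIco, m, j, h⟩
      refine ⟨Encodable.encode ((m, j) : ℕ × ℕ), ?_, hIco⟩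
      intro n
      rw [Denumerable.ofNat_encode]
      exact h n
    · rintro ⟨k, hk, hIco⟩
      exact ⟨hIco, (Denumerable.ofNat (ℕ × ℕ) k).1, (Denumerable.ofNat (ℕ × ℕ) k).2, hk⟩

end
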